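/- Let d ≥ 3 be odd and 1 ≤ i ≤ [(d+2)/4]. There exist real coefficients b₁, …, b_i with b_i = 1 such that u(t, r) = ∑_{m=1}^i b_m t^{2i−2m} r^{2m−d} satisfies the radial wave equation u_{tt} = u_{rr} + ((d−1)/r) u_r for all t ∈ ℝ and r > 0; moreover u(0, r) = r^{2i−d} and ∂_t u(0, r) = 0. -/

import Mathlib

open Finset

lemma deriv_pow_sum (S : Finset ℕ) (a : ℕ → ℝ) (e : ℕ → ℕ) (t : ℝ) :
    deriv (fun s : ℝ => ∑ m ∈ S, a m * s ^ e m) t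
      = ∑ m ∈ S, a m * ((e m : ℝ) * t ^ (e m - 1)) :=
  (HasDerivAt.fun_sum fun m _ => (hasDerivAt_pow (e m) t).const_mul (a m)).deriv

lemma deriv_zpow_sum (S : Finset ℕ) (a : ℕ → ℝ) (e : ℕ → ℤ) (x : ℝ) (hx : x ≠ 0) :
    deriv (fun ρ : ℝ => ∑ m ∈ S, a m * ρ ^ e m) x
      = ∑ m ∈ S, a m * ((e m : ℝ) * x ^ (e m - 1)) :=
  (HasDerivAt.fun_sum fun m _ => (hasDerivAt_zpow (e m) x (Or.inl hx)).const_mul (a m)).deriv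

noncomputable def Bco (d i : ℕ) : ℕ → ℝ
  | m => if h : i ≤ m then 1
    else ((2*(m:ℝ)+2-d) * (2*m) / ((2*(i:ℝ)-2*m) * (2*(i:ℝ)-2*m-1))) * Bco d i (m+1)
  termination_by m => i - m
  decreasing_by omega

lemma Bco_top (d i m : ℕ) (h : i ≤ m) : Bco d i m = 1 := by
  rw [Bco, dif_pos h]

lemma Bco_rec (d i m : ℕ) (hm : m < i) :
    Bco d i m * ((2*(i:ℝ)-2*m) * (2*(i:ℝ)-2*m-1))
      = Bco d i (m+1) * ((2*(m:ℝ)+2-d) * (2*m)) := by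
  rw [Bco, dif_neg (by omega)]
  have h1 : (2:ℝ)*i - 2*m ≥ 2 := by
    have : (m:ℝ) + 1 ≤ i := by exact_mod_cast hm
    linarith
  have h2 : (2*(i:ℝ)-2*m) * (2*(i:ℝ)-2*m-1) ≠ 0 := by nlinarith
  rw [div_mul_eq_mul_div, div_mul_cancel₀ _ h2]; ring

/-- For odd d ≥ 3 and 1 ≤ i ≤ ⌊(d+2)/4⌋, there are coefficients b₁,…,b_i with b_i = 1 so that
u(t,r) = ∑_{m=1}^i b_m t^{2i−2m} r^{2m−d} solves u_tt = u_rr + ((d−1)/r) u_r for r > 0,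
with data u(0,r) = r^{2i−d} and ∂_t u(0,r) = 0. -/
theorem odd_solution_f_data (d : ℕ) (hd : 3 ≤ d) (hodd : Odd d)
    (i : ℕ) (hi1 : 1 ≤ i) (hi2 : i ≤ (d + 2) / 4) :
    ∃ b : ℕ → ℝ, b i = 1 ∧
      (∀ (t r : ℝ), 0 < r →
        deriv (deriv (fun s : ℝ =>
            ∑ m ∈ Finset.Icc 1 i, b m * s ^ (2 * i - 2 * m) * r ^ ((2 * m : ℤ) - d))) t
          = deriv (deriv (fun ρ : ℝ =>
              ∑ m ∈ Finset.Icc 1 i, b m * t ^ (2 * i - 2 * m) * ρ ^ ((2 * m : ℤ) - d))) r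
            + ((d : ℝ) - 1) / r *
              deriv (fun ρ : ℝ =>
                ∑ m ∈ Finset.Icc 1 i, b m * t ^ (2 * i - 2 * m) * ρ ^ ((2 * m : ℤ) - d)) r) ∧
      (∀ r : ℝ, 0 < r →
        (∑ m ∈ Finset.Icc 1 i, b m * (0 : ℝ) ^ (2 * i - 2 * m) * r ^ ((2 * m : ℤ) - d))
            = r ^ ((2 * i : ℤ) - d) ∧
          deriv (fun s : ℝ =>
            ∑ m ∈ Finset.Icc 1 i, b m * s ^ (2 * i - 2 * m) * r ^ ((2 * m : ℤ) - d)) 0 = 0) := by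
  set b : ℕ → ℝ := Bco d i with hb
  refine ⟨b, Bco_top d i i le_rfl, ?_, ?_⟩
  · -- the PDE
    intro t r hr
    have hr' : r ≠ 0 := hr.ne'
    -- rewrite the t-function with the coefficient in front
    have hf : (fun s : ℝ =>
        ∑ m ∈ Finset.Icc 1 i, b m * s ^ (2 * i - 2 * m) * r ^ ((2 * m : ℤ) - d))
        = fun s : ℝ => ∑ m ∈ Finset.Icc 1 i,
            (b m * r ^ ((2 * m : ℤ) - d)) * s ^ (2 * i - 2 * m) := by
      funext s; exact Finset.sum_congr rfl fun m _ => by ring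
    have hd1 : deriv (fun s : ℝ =>
        ∑ m ∈ Finset.Icc 1 i, b m * s ^ (2 * i - 2 * m) * r ^ ((2 * m : ℤ) - d))
        = fun t : ℝ => ∑ m ∈ Finset.Icc 1 i,
            (b m * r ^ ((2 * m : ℤ) - d) * ((2 * i - 2 * m : ℕ) : ℝ))
              * t ^ (2 * i - 2 * m - 1) := by
      funext t
      rw [hf, deriv_pow_sum]
      exact Finset.sum_congr rfl fun m _ => by ring
    have LHS : deriv (deriv (fun s : ℝ =>
        ∑ m ∈ Finset.Icc 1 i, b m * s ^ (2 * i - 2 * m) * r ^ ((2 * m : ℤ) - d))) t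
        = ∑ m ∈ Finset.Icc 1 i,
            (b m * r ^ ((2 * m : ℤ) - d) * ((2 * i - 2 * m : ℕ) : ℝ))
              * (((2 * i - 2 * m - 1 : ℕ) : ℝ) * t ^ (2 * i - 2 * m - 1 - 1)) := by
      rw [hd1, deriv_pow_sum]
    -- the r-function
    have hg : (fun ρ : ℝ =>
        ∑ m ∈ Finset.Icc 1 i, b m * t ^ (2 * i - 2 * m) * ρ ^ ((2 * m : ℤ) - d))
        = fun ρ : ℝ => ∑ m ∈ Finset.Icc 1 i,
            (b m * t ^ (2 * i - 2 * m)) * ρ ^ ((2 * m : ℤ) - d) := rfl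
    have hg1 : ∀ x : ℝ, x ≠ 0 → deriv (fun ρ : ℝ =>
        ∑ m ∈ Finset.Icc 1 i, b m * t ^ (2 * i - 2 * m) * ρ ^ ((2 * m : ℤ) - d)) x
        = ∑ m ∈ Finset.Icc 1 i,
            (b m * t ^ (2 * i - 2 * m) * (((2 * m : ℤ) - d : ℤ) : ℝ))
              * x ^ ((2 * m : ℤ) - d - 1) := by
      intro x hx
      rw [hg, deriv_zpow_sum _ _ _ x hx]
      exact Finset.sum_congr rfl fun m _ => by ring
    have hev : deriv (fun ρ : ℝ =>
        ∑ m ∈ Finset.Icc 1 i, b m * t ^ (2 * i - 2 * m) * ρ ^ ((2 * m : ℤ) - d))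
        =ᶠ[nhds r] fun x : ℝ => ∑ m ∈ Finset.Icc 1 i,
            (b m * t ^ (2 * i - 2 * m) * (((2 * m : ℤ) - d : ℤ) : ℝ))
              * x ^ ((2 * m : ℤ) - d - 1) := by
      filter_upwards [eventually_ne_nhds hr'] with x hx using hg1 x hx
    have RHS2 : deriv (deriv (fun ρ : ℝ =>
        ∑ m ∈ Finset.Icc 1 i, b m * t ^ (2 * i - 2 * m) * ρ ^ ((2 * m : ℤ) - d))) r
        = ∑ m ∈ Finset.Icc 1 i,
            (b m * t ^ (2 * i - 2 * m) * (((2 * m : ℤ) - d : ℤ) : ℝ))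
              * ((((2 * m : ℤ) - d - 1 : ℤ) : ℝ) * r ^ ((2 * m : ℤ) - d - 1 - 1)) := by
      rw [hev.deriv_eq, deriv_zpow_sum _ _ _ r hr']
    rw [LHS, RHS2, hg1 r hr', Finset.mul_sum, ← Finset.sum_add_distrib]
    -- reduce both sides to canonical sums
    have LHSc : ∑ m ∈ Finset.Icc 1 i,
            (b m * r ^ ((2 * m : ℤ) - d) * ((2 * i - 2 * m : ℕ) : ℝ))
              * (((2 * i - 2 * m - 1 : ℕ) : ℝ) * t ^ (2 * i - 2 * m - 1 - 1))
        = ∑ m ∈ Finset.Icc 1 i,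
            b m * ((2*(i:ℝ)-2*m) * (2*(i:ℝ)-2*m-1)) * t ^ (2 * i - 2 * m - 2)
              * r ^ ((2 * m : ℤ) - d) := by
      refine Finset.sum_congr rfl fun m hm => ?_
      simp only [Finset.mem_Icc] at hm
      rcases eq_or_lt_of_le hm.2 with h | h
      · subst h
        simp
      · have h1 : ((2 * i - 2 * m : ℕ) : ℝ) = 2*(i:ℝ) - 2*m := by
          push_cast [Nat.cast_sub (by omega : 2*m ≤ 2*i)]; ring
        have h2 : ((2 * i - 2 * m - 1 : ℕ) : ℝ) = 2*(i:ℝ) - 2*m - 1 := by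
          push_cast [Nat.cast_sub (by omega : 1 ≤ 2*i - 2*m),
            Nat.cast_sub (by omega : 2*m ≤ 2*i)]; ring
        have h3 : 2 * i - 2 * m - 1 - 1 = 2 * i - 2 * m - 2 := by omega
        rw [h1, h2, h3]; ring
    have RHSc : ∑ m ∈ Finset.Icc 1 i,
            ((b m * t ^ (2 * i - 2 * m) * (((2 * m : ℤ) - d : ℤ) : ℝ))
              * ((((2 * m : ℤ) - d - 1 : ℤ) : ℝ) * r ^ ((2 * m : ℤ) - d - 1 - 1))
            + ((d : ℝ) - 1) / r *
              ((b m * t ^ (2 * i - 2 * m) * (((2 * m : ℤ) - d : ℤ) : ℝ))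
                * r ^ ((2 * m : ℤ) - d - 1)))
        = ∑ m ∈ Finset.Icc 1 i,
            b m * ((2*(m:ℝ)-d) * (2*(m:ℝ)-2)) * t ^ (2 * i - 2 * m)
              * r ^ ((2 * m : ℤ) - d - 2) := by
      refine Finset.sum_congr rfl fun m hm => ?_
      have e1 : r ^ ((2 * m : ℤ) - d - 1) = r ^ ((2 * m : ℤ) - d - 2) * r := by
        rw [show (2 * m : ℤ) - d - 1 = ((2 * m : ℤ) - d - 2) + 1 by ring,
          zpow_add_one₀ hr']
      have e2 : (2 * m : ℤ) - d - 1 - 1 = (2 * m : ℤ) - d - 2 := by ring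
      rw [e1, e2]
      have hcast : (((2 * m : ℤ) - d : ℤ) : ℝ) = 2*(m:ℝ) - d := by push_cast; ring
      have hcast2 : (((2 * m : ℤ) - d - 1 : ℤ) : ℝ) = 2*(m:ℝ) - d - 1 := by push_cast; ring
      rw [hcast, hcast2]
      field_simp
      ring
    rw [LHSc, RHSc]
    -- now the combinatorial identity
    obtain ⟨j, rfl⟩ : ∃ j, i = j + 1 := ⟨i - 1, by omega⟩
    rw [← Finset.Ico_add_one_right_eq_Icc, Finset.sum_Ico_eq_sum_range,
      Finset.sum_Ico_eq_sum_range]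
    simp only [Nat.succ_sub_one, Nat.add_sub_cancel]
    rw [Finset.sum_range_succ]
    conv_rhs => rw [Finset.sum_range_succ']
    have key : ∀ k, k < j →
        b (1+k) * ((2*(((j:ℕ)+1:ℕ):ℝ)-2*((1+k:ℕ):ℝ)) * (2*(((j:ℕ)+1:ℕ):ℝ)-2*((1+k:ℕ):ℝ)-1))
          * t ^ (2 * (j+1) - 2 * (1+k) - 2) * r ^ ((2 * ((1:ℕ)+k) : ℤ) - d)
        = b (1+(k+1)) * ((2*(((1:ℕ)+(k+1):ℕ):ℝ)-d) * (2*(((1:ℕ)+(k+1):ℕ):ℝ)-2))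
          * t ^ (2 * (j+1) - 2 * (1+(k+1))) * r ^ ((2 * ((1:ℕ)+(k+1)) : ℤ) - d - 2) := by
      intro k hk
      have hrec := Bco_rec d (j+1) (1+k) (by omega)
      have hexp_t : 2 * (j+1) - 2 * (1+k) - 2 = 2 * (j+1) - 2 * (1+(k+1)) := by omega
      have hexp_r : (2 * ((1:ℕ)+(k+1)) : ℤ) - d - 2 = (2 * ((1:ℕ)+k) : ℤ) - d := by
        push_cast; ring
      have hb2 : (1:ℕ)+(k+1) = (1+k)+1 := by omega
      rw [hexp_t, hexp_r, hb2]
      push_cast at hrec ⊢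
      linear_combination
        (t ^ (2 * (j+1) - 2 * (1+k+1)) * r ^ (2 * (1+(k:ℤ)) - d)) * hrec
    congr 1
    · exact Finset.sum_congr rfl fun k hk => key k (Finset.mem_range.mp hk)
    · -- both leftover terms vanish
      trans (0:ℝ)
      · have hz : (2*(((j:ℕ)+1:ℕ):ℝ)-2*((1+j:ℕ):ℝ)) = 0 := by push_cast; ring
        rw [hz]; ring
      · have hz : (2*(((1:ℕ)+0:ℕ):ℝ)-2) = 0 := by norm_num
        rw [hz]; ring
  · -- initial data
    intro r hr
    constructor
    · rw [Finset.sum_eq_single_of_mem i (by simp [hi1])]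
      · have hbi : b i = 1 := Bco_top d i i le_rfl
        rw [hbi]
        norm_num
      · intro m hm hne
        simp only [Finset.mem_Icc] at hm
        have : 2 * i - 2 * m ≠ 0 := by omega
        rw [zero_pow this]
        ring
    · have hf : (fun s : ℝ =>
          ∑ m ∈ Finset.Icc 1 i, b m * s ^ (2 * i - 2 * m) * r ^ ((2 * m : ℤ) - d))
          = fun s : ℝ => ∑ m ∈ Finset.Icc 1 i,
              (b m * r ^ ((2 * m : ℤ) - d)) * s ^ (2 * i - 2 * m) := by
        funext s; exact Finset.sum_congr rfl fun m _ => by ring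
      rw [hf, deriv_pow_sum]
      refine Finset.sum_eq_zero fun m hm => ?_
      simp only [Finset.mem_Icc] at hm
      rcases eq_or_lt_of_le hm.2 with h | h
      · subst h
        simp
      · rw [zero_pow (by omega : 2 * i - 2 * m - 1 ≠ 0)]
        ring
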